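/- Let f be an integrable function on 𝕋 and let z ∈ ℂ with |z| < 1. Then the Poisson integral (Pf)(z) = (1/2π)∫₀^{2π} ((1 − |z|²)/|e^{it} − z|²) f(e^{it}) dt satisfies (Pf)(z) = f̂(0) + Σ_{n=1}^{∞} f̂(−n) z̄ⁿ + Σ_{n=1}^{∞} f̂(n) zⁿ, where both series converge absolutely. -/

import Mathlib

open Complex MeasureTheory intervalIntegral

/-- The `l`-th Fourier coefficient of a function on the unit circle `𝕋`. -/
noncomputable def fourierCoeffT (g : ℂ → ℂ) (l : ℤ) : ℂ :=
  (1 / (2 * Real.pi)) •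
    ∫ θ in (0:ℝ)..(2 * Real.pi), g (Complex.exp (Complex.I * θ)) * Complex.exp (-Complex.I * l * θ)

/-- For an integrable function `f` on `𝕋` and `|z| < 1`, the Poisson integral of `f` at `z`
equals `f̂(0) + Σ_{n≥1} f̂(−n) z̄ⁿ + Σ_{n≥1} f̂(n) zⁿ`, both series converging absolutely. -/
private lemma kernel_eq (z : ℂ) (hz : ‖z‖ < 1) (t : ℝ) :
    (((1 - ‖z‖ ^ 2) / ‖Complex.exp (Complex.I * t) - z‖ ^ 2 : ℝ) : ℂ) =
      (1 - z * Complex.exp (-(Complex.I * t)))⁻¹ +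
        (starRingEnd ℂ) z * Complex.exp (Complex.I * t) *
          (1 - (starRingEnd ℂ) z * Complex.exp (Complex.I * t))⁻¹ := by
  set e := Complex.exp (Complex.I * t) with he_def
  have hce : (starRingEnd ℂ) e = Complex.exp (-(Complex.I * t)) := by
    rw [he_def, ← Complex.exp_conj]; simp
  have habs : ‖e‖ = 1 := by simp [he_def, Complex.norm_exp]
  have he : e * (starRingEnd ℂ) e = 1 := by
    rw [Complex.mul_conj]; norm_cast
    rw [← Complex.sq_norm, habs]; norm_num
  set u := z * (starRingEnd ℂ) e with hu_def
  have hcu : (starRingEnd ℂ) u = (starRingEnd ℂ) z * e := by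
    simp [hu_def]
  have hru : ‖u‖ < 1 := by
    rw [hu_def, norm_mul, Complex.norm_conj, habs, mul_one]; exact hz
  have hrcu : ‖(starRingEnd ℂ) u‖ < 1 := by rwa [Complex.norm_conj]
  have h1 : (1 : ℂ) - u ≠ 0 := by
    intro h
    have : u = 1 := by linear_combination -h
    simp [this] at hru
  have h2 : (1 : ℂ) - (starRingEnd ℂ) u ≠ 0 := by
    intro h
    have : (starRingEnd ℂ) u = 1 := by linear_combination -h
    simp [this] at hrcu
  have hez : e - z ≠ 0 := by
    intro h
    have : e = z := by linear_combination h
    rw [this] at habs; exact absurd hz (by rw [habs]; norm_num)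
  have hcez : (starRingEnd ℂ) e - (starRingEnd ℂ) z ≠ 0 := by
    intro h
    apply hez
    have := congrArg (starRingEnd ℂ) h
    simpa using this
  have key1 : (e - z) * ((starRingEnd ℂ) e - (starRingEnd ℂ) z) = (1 - u) * (1 - (starRingEnd ℂ) u) := by
    rw [hcu, hu_def]; linear_combination (1 - z * (starRingEnd ℂ) z) * he
  have hcast1 : ((‖e - z‖ ^ 2 : ℝ) : ℂ) = (e - z) * ((starRingEnd ℂ) e - (starRingEnd ℂ) z) := by
    rw [Complex.sq_norm]
    push_cast [← Complex.mul_conj]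
    simp
  have hcast2 : ((1 - ‖z‖ ^ 2 : ℝ) : ℂ) = 1 - z * (starRingEnd ℂ) z := by
    push_cast [Complex.sq_norm, ← Complex.mul_conj]
    ring
  rw [Complex.ofReal_div, hcast1, hcast2, ← hce, ← hu_def, ← hcu]
  have huu : z * (starRingEnd ℂ) z = u * (starRingEnd ℂ) u := by
    rw [hu_def, hcu]; linear_combination z * (starRingEnd ℂ) z * he.symm
  rw [key1, huu]
  field_simp
  ring

theorem stmt_9 (f : ℂ → ℂ)
    (hf : IntervalIntegrable (fun θ : ℝ => f (Complex.exp (Complex.I * θ))) volume 0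
      (2 * Real.pi))
    (z : ℂ) (hz : ‖z‖ < 1) :
    Summable (fun n : ℕ => ‖fourierCoeffT f (-(n + 1)) * (starRingEnd ℂ z) ^ (n + 1)‖) ∧
    Summable (fun n : ℕ => ‖fourierCoeffT f (n + 1) * z ^ (n + 1)‖) ∧
    (1 / (2 * Real.pi)) •
        ∫ t in (0:ℝ)..(2 * Real.pi),
          (((1 - ‖z‖ ^ 2) / ‖Complex.exp (Complex.I * t) - z‖ ^ 2 : ℝ) : ℂ) *
            f (Complex.exp (Complex.I * t)) =
      fourierCoeffT f 0 + (∑' n : ℕ, fourierCoeffT f (-(n + 1)) * (starRingEnd ℂ z) ^ (n + 1))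
        + ∑' n : ℕ, fourierCoeffT f (n + 1) * z ^ (n + 1) := by
  have hpi : (0:ℝ) < 2 * Real.pi := by positivity
  set r := ‖z‖ with hr_def
  have hr0 : 0 ≤ r := norm_nonneg z
  set fa : ℝ → ℂ := fun t => f (Complex.exp (Complex.I * t)) with hfa_def
  set μ : Measure ℝ := volume.restrict (Set.Ioc (0:ℝ) (2 * Real.pi)) with hμ_def
  have hfa : Integrable fa μ := hf.1
  -- raw Fourier integrals
  set Fc : ℤ → ℂ := fun l =>
    ∫ θ in (0:ℝ)..(2 * Real.pi), fa θ * Complex.exp (-Complex.I * l * θ) with hFc_def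
  have hfour : ∀ l : ℤ, fourierCoeffT f l = (1 / (2 * Real.pi)) • Fc l := fun l => rfl
  set C : ℝ := ∫ t, ‖fa t‖ ∂μ with hC_def
  have hC0 : 0 ≤ C := integral_nonneg fun t => norm_nonneg _
  -- bound on Fourier integrals
  have hFcle : ∀ l : ℤ, ‖Fc l‖ ≤ C := by
    intro l
    rw [hFc_def, hC_def, ← intervalIntegral.integral_of_le hpi.le]
    refine le_trans (intervalIntegral.norm_integral_le_integral_norm hpi.le) (le_of_eq ?_)
    apply intervalIntegral.integral_congr
    intro t _
    show ‖fa t * Complex.exp (-Complex.I * l * t)‖ = ‖fa t‖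
    rw [norm_mul]
    have : ‖Complex.exp (-Complex.I * l * t)‖ = 1 := by simp [Complex.norm_exp]
    rw [this, mul_one]
  -- generic summability of coefficient series
  have hgeomC : Summable (fun n : ℕ => (1 / (2 * Real.pi) * C) * r ^ (n + 1)) := by
    have := (summable_geometric_of_lt_one hr0 hz).mul_left (1 / (2 * Real.pi) * C * r)
    refine this.congr fun n => ?_
    ring
  have hcoef : ∀ (w : ℂ), ‖w‖ = r → ∀ (l : ℕ → ℤ),
      Summable (fun n : ℕ => ‖fourierCoeffT f (l n) * w ^ (n + 1)‖) := by
    intro w hw l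
    apply Summable.of_nonneg_of_le (fun n => norm_nonneg _) _ hgeomC
    intro n
    rw [norm_mul, hfour, norm_smul, norm_pow]
    have h2 : ‖w‖ = r := hw
    rw [h2]
    apply mul_le_mul_of_nonneg_right _ (pow_nonneg hr0 _)
    have : ‖(1 / (2 * Real.pi) : ℝ)‖ = 1 / (2 * Real.pi) := by
      rw [Real.norm_eq_abs, abs_of_pos (by positivity)]
    rw [this]
    exact mul_le_mul_of_nonneg_left (hFcle _) (by positivity)
  have hsum1 : Summable (fun n : ℕ => ‖fourierCoeffT f (-(n + 1)) * (starRingEnd ℂ z) ^ (n + 1)‖) :=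
    hcoef _ (Complex.norm_conj z) _
  have hsum2 : Summable (fun n : ℕ => ‖fourierCoeffT f (n + 1) * z ^ (n + 1)‖) :=
    hcoef _ rfl _
  refine ⟨hsum1, hsum2, ?_⟩
  -- the series expansion of the kernel
  set u : ℝ → ℂ := fun t => z * Complex.exp (-(Complex.I * t)) with hu_def
  set v : ℝ → ℂ := fun t => (starRingEnd ℂ) z * Complex.exp (Complex.I * t) with hv_def
  have hu_abs : ∀ t, ‖u t‖ = r := by
    intro t; rw [hu_def]; simp [Complex.norm_exp, hr_def]
  have hv_abs : ∀ t, ‖v t‖ = r := by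
    intro t; rw [hv_def]; simp [Complex.norm_exp, hr_def]
  set g : ℕ → ℝ → ℂ := fun n t => (u t ^ n + v t ^ (n + 1)) * fa t with hg_def
  have hker : ∀ t : ℝ, HasSum (fun n => g n t)
      ((((1 - r ^ 2) / ‖Complex.exp (Complex.I * t) - z‖ ^ 2 : ℝ) : ℂ) * fa t) := by
    intro t
    rw [hr_def, kernel_eq z hz t]
    have h1 : HasSum (fun n : ℕ => u t ^ n) (1 - u t)⁻¹ :=
      hasSum_geometric_of_norm_lt_one (by rw [show ‖u t‖ = r from hu_abs t]; exact hz)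
    have h2 : HasSum (fun n : ℕ => v t ^ (n + 1)) (v t * (1 - v t)⁻¹) := by
      have := (hasSum_geometric_of_norm_lt_one
        (show ‖v t‖ < 1 by rw [show ‖v t‖ = r from hv_abs t]; exact hz)).mul_left (v t)
      simpa only [← pow_succ'] using this
    have := (h1.add h2).mul_right (fa t)
    convert this using 2
  -- integrability of each term
  have hcont_u : Continuous u := by
    rw [hu_def]; fun_prop
  have hcont_v : Continuous v := by
    rw [hv_def]; fun_prop
  have hbd : ∀ (n : ℕ) (t : ℝ), ‖u t ^ n + v t ^ (n + 1)‖ ≤ r ^ n + r ^ (n + 1) := by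
    intro n t
    refine le_trans (norm_add_le _ _) ?_
    rw [norm_pow, norm_pow, show ‖u t‖ = r from hu_abs t, show ‖v t‖ = r from hv_abs t]
  have hg_int : ∀ n, Integrable (g n) μ := by
    intro n
    exact hfa.bdd_mul ((hcont_u.pow n).add (hcont_v.pow (n + 1))).aestronglyMeasurable
      (c := r ^ n + r ^ (n + 1)) (Filter.Eventually.of_forall (hbd n))
  have hg_norm_le : ∀ n, ∫ t, ‖g n t‖ ∂μ ≤ (r ^ n + r ^ (n + 1)) * C := by
    intro n
    rw [hC_def, ← MeasureTheory.integral_const_mul]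
    refine integral_mono (hg_int n).norm (hfa.norm.const_mul _) fun t => ?_
    simp only [hg_def, norm_mul]
    exact mul_le_mul_of_nonneg_right (hbd n t) (norm_nonneg _)
  have hg_norm_sum : Summable (fun n => ∫ t, ‖g n t‖ ∂μ) := by
    refine Summable.of_nonneg_of_le (fun n => integral_nonneg fun t => norm_nonneg _)
      hg_norm_le ?_
    have h1 := (summable_geometric_of_lt_one hr0 hz).mul_right C
    have h2 := ((summable_geometric_of_lt_one hr0 hz).mul_left r).mul_right C
    refine (h1.add h2).congr fun n => ?_
    ring
  have hHasSum : HasSum (fun n => ∫ t, g n t ∂μ) (∫ t, ∑' n, g n t ∂μ) :=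
    hasSum_integral_of_summable_integral_norm hg_int hg_norm_sum
  -- value of each integral
  set A : ℕ → ℂ := fun n => z ^ n * Fc n with hA_def
  set B : ℕ → ℂ := fun n => (starRingEnd ℂ z) ^ (n + 1) * Fc (-(n + 1)) with hB_def
  have hint_each : ∀ n, ∫ t, g n t ∂μ = A n + B n := by
    intro n
    have e1 : Integrable (fun t => u t ^ n * fa t) μ :=
      hfa.bdd_mul (hcont_u.pow n).aestronglyMeasurable
        (c := r ^ n) (Filter.Eventually.of_forall fun t => by rw [norm_pow, show ‖u t‖ = r from hu_abs t])
    have e2 : Integrable (fun t => v t ^ (n + 1) * fa t) μ :=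
      hfa.bdd_mul (hcont_v.pow (n + 1)).aestronglyMeasurable
        (c := r ^ (n + 1)) (Filter.Eventually.of_forall fun t => by rw [norm_pow, show ‖v t‖ = r from hv_abs t])
    have hsplit : ∀ t, g n t = u t ^ n * fa t + v t ^ (n + 1) * fa t := by
      intro t; rw [hg_def]; ring
    rw [integral_congr_ae (Filter.Eventually.of_forall hsplit), integral_add e1 e2]
    congr 1
    · have hpt : ∀ t : ℝ, u t ^ n * fa t = z ^ n * (fa t * Complex.exp (-Complex.I * ((n : ℤ) : ℂ) * t)) := by
        intro t
        rw [hu_def]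
        simp only [mul_pow, ← Complex.exp_nat_mul]
        rw [show ((n : ℕ) : ℂ) * -(Complex.I * t) = -Complex.I * ((n : ℤ) : ℂ) * t by push_cast; ring]
        ring
      rw [integral_congr_ae (Filter.Eventually.of_forall hpt), MeasureTheory.integral_const_mul, hA_def,
        hFc_def]
      simp only []
      rw [← intervalIntegral.integral_of_le hpi.le]
    · have hpt : ∀ t : ℝ, v t ^ (n + 1) * fa t
          = (starRingEnd ℂ z) ^ (n + 1) * (fa t * Complex.exp (-Complex.I * ((-(n + 1) : ℤ) : ℂ) * t)) := by
        intro t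
        rw [hv_def]
        simp only [mul_pow, ← Complex.exp_nat_mul]
        rw [show ((n + 1 : ℕ) : ℂ) * (Complex.I * t) = -Complex.I * ((-(n + 1) : ℤ) : ℂ) * t by push_cast; ring]
        ring
      rw [integral_congr_ae (Filter.Eventually.of_forall hpt), MeasureTheory.integral_const_mul, hB_def,
        hFc_def]
      simp only []
      rw [← intervalIntegral.integral_of_le hpi.le]
  -- summability of A and B
  have hA_sum : Summable A := by
    refine Summable.of_norm ?_
    refine Summable.of_nonneg_of_le (fun n => norm_nonneg _) ?_
      ((summable_geometric_of_lt_one hr0 hz).mul_left C)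
    intro n
    rw [hA_def]
    simp only [norm_mul, norm_pow]
    rw [show ‖z‖ = r from rfl, mul_comm]
    exact mul_le_mul_of_nonneg_right (hFcle _) (pow_nonneg hr0 _)
  have hB_sum : Summable B := by
    refine Summable.of_norm ?_
    refine Summable.of_nonneg_of_le (fun n => norm_nonneg _) ?_
      (((summable_geometric_of_lt_one hr0 hz).mul_left (C * r)))
    intro n
    rw [hB_def]
    simp only [norm_mul, norm_pow]
    rw [show ‖(starRingEnd ℂ) z‖ = r from Complex.norm_conj z]
    calc r ^ (n + 1) * ‖Fc (-(n + 1))‖ ≤ r ^ (n + 1) * C :=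
          mul_le_mul_of_nonneg_left (hFcle _) (pow_nonneg hr0 _)
      _ = C * r * r ^ n := by ring
  -- put everything together
  have hmain : ∫ t in (0:ℝ)..(2 * Real.pi),
      (((1 - ‖z‖ ^ 2) / ‖Complex.exp (Complex.I * t) - z‖ ^ 2 : ℝ) : ℂ) *
        f (Complex.exp (Complex.I * t)) = Fc 0 + (∑' n : ℕ, B n) + ∑' n : ℕ, A (n + 1) := by
    rw [intervalIntegral.integral_of_le hpi.le]
    have h1 : ∫ t, ∑' n, g n t ∂μ = ∑' n, (A n + B n) := by
      rw [← hHasSum.tsum_eq]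
      exact tsum_congr hint_each
    have h2 : (∫ t, (∑' n, g n t) ∂μ)
        = ∫ t in Set.Ioc (0:ℝ) (2 * Real.pi),
            (((1 - ‖z‖ ^ 2) / ‖Complex.exp (Complex.I * t) - z‖ ^ 2 : ℝ) : ℂ) *
              f (Complex.exp (Complex.I * t)) ∂volume := by
      refine integral_congr_ae (Filter.Eventually.of_forall fun t => ?_)
      exact (hker t).tsum_eq
    rw [← h2, h1, Summable.tsum_add hA_sum hB_sum, Summable.tsum_eq_zero_add hA_sum]
    rw [show A 0 = Fc 0 by rw [hA_def]; simp]
    ring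
  rw [hmain]
  -- now distribute the scalar
  have hc : ∀ (x : ℂ), (1 / (2 * Real.pi) : ℝ) • x = ((1 / (2 * Real.pi) : ℝ) : ℂ) * x :=
    fun x => Complex.real_smul
  set c : ℂ := ((1 / (2 * Real.pi) : ℝ) : ℂ) with hc_def
  rw [hc]
  have hB' : (∑' n : ℕ, fourierCoeffT f (-(n + 1)) * (starRingEnd ℂ z) ^ (n + 1))
      = c * ∑' n : ℕ, B n := by
    rw [← tsum_mul_left]
    refine tsum_congr fun n => ?_
    rw [hfour, hc, hB_def]
    ring
  have hA' : (∑' n : ℕ, fourierCoeffT f (n + 1) * z ^ (n + 1)) = c * ∑' n : ℕ, A (n + 1) := by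
    rw [← tsum_mul_left]
    refine tsum_congr fun n => ?_
    rw [hfour, hc, hA_def]
    push_cast
    ring
  rw [hB', hA', hfour, hc]
  ring
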